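/- Let $\mathcal{F}$ be a family of subsets of $[n] = \{1,\ldots,n\}$ that is an antichain (no member contains another) and is $k$-intersecting (any two members, including a member with itself, intersect in at least $k$ elements). Then $|\mathcal{F}| \le \binom{n}{t}$ where $t = \lceil (n+k)/2 \rceil$. (Milner's theorem) -/

import Mathlib

open Finset Nat
open scoped FinsetFamily

namespace MilnerAux

variable {α β : Type*}

/-- Shadow commutes with mapping by an embedding. -/
lemma shadow_map [DecidableEq α] [DecidableEq β] (g : α ↪ β) (𝒜 : Finset (Finset α)) :
    ∂ (𝒜.image fun A => A.map g) = (∂ 𝒜).image fun A => A.map g := by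
  ext t
  simp only [mem_shadow_iff, mem_image]
  constructor
  · rintro ⟨s, ⟨A, hA, rfl⟩, a, ha, rfl⟩
    obtain ⟨x, hx, rfl⟩ := Finset.mem_map.1 ha
    exact ⟨A.erase x, ⟨A, hA, x, hx, rfl⟩, by rw [Finset.map_erase]⟩
  · rintro ⟨s, ⟨A, hA, x, hx, rfl⟩, rfl⟩
    exact ⟨A.map g, ⟨A, hA, rfl⟩, g x, Finset.mem_map_of_mem g hx,
      (Finset.map_erase g A x).symm⟩

/-- Local LYM over a bounded ground set, in the form we need:
if `m < 2 * a` then the shadow of a family of `a`-sets inside `range m` is at least as large. -/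
lemma card_le_card_shadow_of_bounded (m a : ℕ) (F : Finset (Finset ℕ))
    (hb : ∀ A ∈ F, A ⊆ range m) (hs : ∀ A ∈ F, A.card = a)
    (ha : 1 ≤ a) (hma : m < 2 * a) : F.card ≤ (∂ F).card := by
  classical
  rcases F.eq_empty_or_nonempty with rfl | ⟨A₀, hA₀⟩
  · simp
  have ham : a ≤ m := by
    have := (hb A₀ hA₀)
    calc a = A₀.card := (hs A₀ hA₀).symm
    _ ≤ (range m).card := card_le_card (hb A₀ hA₀)
    _ = m := card_range m
  have key : (∂ F).card * a ≥ F.card * a := by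
    have h1 : ∀ A ∈ F, a ≤ ((∂ F).bipartiteAbove (fun A S => S ⊆ A) A).card := by
      intro A hA
      have : A.image A.erase ⊆ (∂ F).bipartiteAbove (fun A S => S ⊆ A) A := by
        intro S hS
        obtain ⟨x, hx, rfl⟩ := mem_image.1 hS
        rw [mem_bipartiteAbove]
        exact ⟨erase_mem_shadow hA hx, erase_subset _ _⟩
      calc a = A.card := (hs A hA).symm
      _ = (A.image A.erase).card := (Finset.card_image_of_injOn (A.erase_injOn)).symm
      _ ≤ _ := card_le_card this
    have h2 : ∀ S ∈ ∂ F, (F.bipartiteBelow (fun A S => S ⊆ A) S).card ≤ m - a + 1 := by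
      intro S hS
      obtain ⟨B, hB, hSB, hcard⟩ := mem_shadow_iff_exists_mem_card_add_one.1 hS
      have hScard : S.card = a - 1 := by
        have := hs B hB; omega
      have hSrange : S ⊆ range m := hSB.trans (hb B hB)
      have hsub : F.bipartiteBelow (fun A S => S ⊆ A) S ⊆
          (range m \ S).image fun x => insert x S := by
        intro A hA
        rw [mem_bipartiteBelow] at hA
        obtain ⟨hAF, hSA⟩ := hA
        have hAcard : A.card = a := hs A hAF
        have : (A \ S).Nonempty := by
          rw [← Finset.card_pos, card_sdiff_of_subset hSA]; omega
        obtain ⟨x, hx⟩ := this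
        have hxA : x ∈ A := (mem_sdiff.1 hx).1
        have hxS : x ∉ S := (mem_sdiff.1 hx).2
        refine mem_image.2 ⟨x, mem_sdiff.2 ⟨hb A hAF hxA, hxS⟩, ?_⟩
        apply Finset.eq_of_subset_of_card_le (insert_subset hxA hSA)
        rw [card_insert_of_notMem hxS]
        omega
      calc (F.bipartiteBelow (fun A S => S ⊆ A) S).card
          ≤ ((range m \ S).image fun x => insert x S).card := card_le_card hsub
        _ ≤ (range m \ S).card := card_image_le
        _ = m - (a - 1) := by rw [card_sdiff_of_subset hSrange, card_range, hScard]
        _ ≤ m - a + 1 := by omega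
    calc F.card * a ≤ (∂ F).card * (m - a + 1) :=
          card_mul_le_card_mul (fun A S => S ⊆ A) h1 h2
    _ ≤ (∂ F).card * a := by
        apply Nat.mul_le_mul_left
        omega
  exact Nat.le_of_mul_le_mul_right key ha


/-! ### Shifting (singleton UV-compressions) -/

section Shift
open UV

lemma compress_singleton (i j : ℕ) (A : Finset ℕ) (hiA : i ∉ A) (hjA : j ∈ A) :
    UV.compress {i} {j} A = insert i (A.erase j) := by
  have hij : i ≠ j := fun h => hiA (h ▸ hjA)
  rw [UV.compress_of_disjoint_of_le (by simpa using hiA) (by simpa using hjA)]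
  ext x
  simp only [sup_eq_union, mem_sdiff, mem_union, mem_singleton, mem_insert, mem_erase]
  constructor
  · rintro ⟨hx1 | hx1, hx2⟩
    · exact Or.inr ⟨hx2, hx1⟩
    · exact Or.inl hx1
  · rintro (rfl | ⟨hx1, hx2⟩)
    · exact ⟨Or.inr rfl, hij⟩
    · exact ⟨Or.inl hx2, hx1⟩

lemma mem_compression_cases {i j : ℕ} {F : Finset (Finset ℕ)} {A' : Finset ℕ}
    (h : A' ∈ 𝓒 {i} {j} F) :
    (A' ∈ F ∧ UV.compress {i} {j} A' ∈ F) ∨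
      (A' ∉ F ∧ ∃ A ∈ F, i ∉ A ∧ j ∈ A ∧ A' = insert i (A.erase j)) := by
  rcases UV.mem_compression.1 h with h1 | ⟨hA', A, hA, hcomp⟩
  · exact Or.inl h1
  · refine Or.inr ⟨hA', A, hA, ?_⟩
    by_cases hc : i ∉ A ∧ j ∈ A
    · exact ⟨hc.1, hc.2, by rw [← hcomp, compress_singleton _ _ _ hc.1 hc.2]⟩
    · exfalso
      apply hA'
      rw [← hcomp, UV.compress, if_neg (by simpa using hc)]
      exact hA

lemma compression_intersecting {i j : ℕ} (hij : i < j) {F : Finset (Finset ℕ)}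
    (hi : ∀ A ∈ F, ∀ B ∈ F, (A ∩ B).Nonempty) :
    ∀ A' ∈ 𝓒 {i} {j} F, ∀ B' ∈ 𝓒 {i} {j} F, (A' ∩ B').Nonempty := by
  have aux : ∀ A' ∈ F, UV.compress {i} {j} A' ∈ F → ∀ B ∈ F, i ∉ B → j ∈ B →
      (A' ∩ insert i (B.erase j)).Nonempty := by
    intro A' hA' hcA' B hB hiB hjB
    by_cases hiA : i ∈ A'
    · exact ⟨i, mem_inter.2 ⟨hiA, mem_insert_self _ _⟩⟩
    by_cases hjA : j ∈ A'
    · rw [compress_singleton _ _ _ hiA hjA] at hcA'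
      obtain ⟨x, hx⟩ := hi _ hcA' B hB
      rw [mem_inter, mem_insert] at hx
      rcases hx with ⟨rfl | hx1, hx2⟩
      · exact absurd hx2 hiB
      · rw [mem_erase] at hx1
        exact ⟨x, mem_inter.2 ⟨hx1.2, mem_insert_of_mem (mem_erase.2 ⟨hx1.1, hx2⟩)⟩⟩
    · obtain ⟨x, hx⟩ := hi A' hA' B hB
      rw [mem_inter] at hx
      have hxj : x ≠ j := fun h => hjA (h ▸ hx.1)
      exact ⟨x, mem_inter.2 ⟨hx.1, mem_insert_of_mem (mem_erase.2 ⟨hxj, hx.2⟩)⟩⟩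
  intro A' hA' B' hB'
  rcases mem_compression_cases hA' with ⟨hA1, hA2⟩ | ⟨hA1, A, hA, hiA, hjA, rfl⟩ <;>
    rcases mem_compression_cases hB' with ⟨hB1, hB2⟩ | ⟨hB1, B, hB, hiB, hjB, rfl⟩
  · exact hi _ hA1 _ hB1
  · exact aux _ hA1 hA2 _ hB hiB hjB
  · rw [inter_comm]; exact aux _ hB1 hB2 _ hA hiA hjA
  · exact ⟨i, mem_inter.2 ⟨mem_insert_self _ _, mem_insert_self _ _⟩⟩

lemma compression_bounded {m i j : ℕ} (hij : i < j) {F : Finset (Finset ℕ)}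
    (hb : ∀ A ∈ F, A ⊆ range m) : ∀ A' ∈ 𝓒 {i} {j} F, A' ⊆ range m := by
  intro A' h
  rcases mem_compression_cases h with ⟨h1, _⟩ | ⟨_, A, hA, hiA, hjA, rfl⟩
  · exact hb _ h1
  · intro x hx
    rcases mem_insert.1 hx with rfl | hx
    · exact mem_range.2 (hij.trans (mem_range.1 (hb A hA hjA)))
    · exact hb A hA (mem_of_mem_erase hx)

lemma compression_sized {a i j : ℕ} {F : Finset (Finset ℕ)}
    (hs : ∀ A ∈ F, A.card = a) : ∀ A' ∈ 𝓒 {i} {j} F, A'.card = a := by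
  intro A' h
  rcases mem_compression_cases h with ⟨h1, _⟩ | ⟨_, A, hA, hiA, hjA, rfl⟩
  · exact hs _ h1
  · have h1 : i ∉ A.erase j := fun hc => hiA (mem_of_mem_erase hc)
    rw [card_insert_of_notMem h1, card_erase_of_mem hjA]
    have := hs A hA
    have : 1 ≤ A.card := card_pos.2 ⟨j, hjA⟩
    omega

def familyMeasure (F : Finset (Finset ℕ)) : ℕ := ∑ A ∈ F, ∑ x ∈ A, x

lemma familyMeasure_compression_lt {i j : ℕ} (hij : i < j) {F : Finset (Finset ℕ)}
    (h : 𝓒 {i} {j} F ≠ F) : familyMeasure (𝓒 {i} {j} F) < familyMeasure F := by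
  unfold familyMeasure
  rw [UV.compression] at h ⊢
  have q : ∀ Q ∈ {A ∈ F | UV.compress {i} {j} A ∉ F}, UV.compress {i} {j} Q ≠ Q := by
    simp_rw [mem_filter]
    intro Q hQ hQeq
    rw [hQeq] at hQ
    exact hQ.2 hQ.1
  have uA : {A ∈ F | UV.compress {i} {j} A ∈ F} ∪ {A ∈ F | UV.compress {i} {j} A ∉ F} = F :=
    filter_union_filter_not_eq _ _
  have ne₂ : {A ∈ F | UV.compress {i} {j} A ∉ F}.Nonempty := by
    refine nonempty_iff_ne_empty.2 fun z => h ?_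
    rw [filter_image, z, image_empty, union_empty]
    rwa [z, union_empty] at uA
  rw [sum_union UV.compress_disjoint]
  conv_rhs => rw [← uA]
  rw [sum_union (disjoint_filter_filter_not _ _ _), add_lt_add_iff_left, filter_image,
    sum_image UV.compress_injOn]
  refine sum_lt_sum_of_nonempty ne₂ fun A hA => ?_
  have hne := q A hA
  have hAF : A ∈ F := (mem_filter.1 hA).1
  have hfired : i ∉ A ∧ j ∈ A := by
    by_contra hc
    apply hne
    rw [UV.compress, if_neg (by simpa using hc)]
  rw [compress_singleton _ _ _ hfired.1 hfired.2,
    sum_insert (fun hc => hfired.1 (mem_of_mem_erase hc))]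
  have h2 : ∑ x ∈ A.erase j, x + j = ∑ x ∈ A, x := Finset.sum_erase_add _ _ hfired.2
  omega

def IsShifted (F : Finset (Finset ℕ)) : Prop := ∀ i j : ℕ, i < j → UV.IsCompressed {i} {j} F

lemma shifted_mem {F : Finset (Finset ℕ)} (hF : IsShifted F) {A : Finset ℕ} (hA : A ∈ F)
    {i j : ℕ} (hij : i < j) (hiA : i ∉ A) (hjA : j ∈ A) : insert i (A.erase j) ∈ F := by
  have h := UV.compress_mem_compression (u := ({i} : Finset ℕ)) (v := ({j} : Finset ℕ)) hA
  rw [compress_singleton _ _ _ hiA hjA] at h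
  rwa [hF i j hij] at h

lemma exists_shifted (m a : ℕ) : ∀ (N : ℕ) (F : Finset (Finset ℕ)), familyMeasure F ≤ N →
    (∀ A ∈ F, A ⊆ range m) → (∀ A ∈ F, A.card = a) →
    (∀ A ∈ F, ∀ B ∈ F, (A ∩ B).Nonempty) →
    ∃ F' : Finset (Finset ℕ), IsShifted F' ∧ (∀ A ∈ F', A ⊆ range m) ∧
      (∀ A ∈ F', A.card = a) ∧ (∀ A ∈ F', ∀ B ∈ F', (A ∩ B).Nonempty) ∧
      F'.card = F.card ∧ (∂ F').card ≤ (∂ F).card := by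
  intro N
  induction N with
  | zero =>
    intro F hm hb hs hi
    by_cases hsh : IsShifted F
    · exact ⟨F, hsh, hb, hs, hi, rfl, le_rfl⟩
    · exfalso
      obtain ⟨i, j, hij, hnc⟩ : ∃ i j, i < j ∧ ¬ UV.IsCompressed {i} {j} F := by
        by_contra hc
        push_neg at hc
        exact hsh fun i j hlt => hc i j hlt
      have := familyMeasure_compression_lt hij hnc
      omega
  | succ N IH =>
    intro F hm hb hs hi
    by_cases hsh : IsShifted F
    · exact ⟨F, hsh, hb, hs, hi, rfl, le_rfl⟩
    · obtain ⟨i, j, hij, hnc⟩ : ∃ i j, i < j ∧ ¬ UV.IsCompressed {i} {j} F := by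
        by_contra hc
        push_neg at hc
        exact hsh fun i j hlt => hc i j hlt
      have hlt := familyMeasure_compression_lt hij hnc
      have hshadow : (∂ (𝓒 {i} {j} F)).card ≤ (∂ F).card := by
        refine UV.card_shadow_compression_le _ _ fun x hx => ⟨j, mem_singleton_self _, ?_⟩
        rw [mem_singleton] at hx
        subst hx
        simp only [Finset.erase_singleton]
        exact UV.isCompressed_self _ _
      obtain ⟨F', h1, h2, h3, h4, h5, h6⟩ := IH (𝓒 {i} {j} F) (by omega)
        (compression_bounded hij hb) (compression_sized hs)
        (compression_intersecting hij hi)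
      exact ⟨F', h1, h2, h3, h4, h5.trans (UV.card_compression _ _ _), h6.trans hshadow⟩

end Shift


/-- **Katona's intersection-shadow theorem** (weak form, one step):
an intersecting family of `a`-sets has shadow at least as large. -/
theorem katonaN : ∀ (m : ℕ), ∀ (a : ℕ) (F : Finset (Finset ℕ)),
    (∀ A ∈ F, A ⊆ range m) → (∀ A ∈ F, A.card = a) →
    (∀ A ∈ F, ∀ B ∈ F, (A ∩ B).Nonempty) → F.card ≤ (∂ F).card := by
  intro m
  induction m using Nat.strong_induction_on with
  | _ m IHm =>
  intro a F hb hs hi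
  rcases F.eq_empty_or_nonempty with rfl | ⟨A₀, hA₀⟩
  · simp
  have ha : 1 ≤ a := by
    obtain ⟨x, hx⟩ := hi A₀ hA₀ A₀ hA₀
    rw [mem_inter] at hx
    have h1 := Finset.card_pos.2 ⟨x, hx.1⟩
    rwa [hs A₀ hA₀] at h1
  by_cases hma : m < 2 * a
  · exact card_le_card_shadow_of_bounded m a F hb hs ha hma
  push_neg at hma
  obtain ⟨G, hsh, hb', hs', hi', hcard, hshad⟩ :=
    exists_shifted m a (familyMeasure F) F le_rfl hb hs hi
  rw [← hcard]
  refine le_trans ?_ hshad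
  clear hb hs hi hcard hshad hA₀
  clear A₀ F
  set p := m - 1 with hp
  have hm2 : 2 ≤ m := by omega
  have hpm : p < m := by omega
  set F₀ := G.filter (fun A => p ∉ A) with hF₀
  set F₁ := G.filter (fun A => p ∈ A) with hF₁
  set T := F₁.image (fun A => A.erase p) with hT
  have hmemrange : ∀ A ∈ G, ∀ x ∈ A, x ≠ p → x ∈ range p := by
    intro A hA x hx hxp
    have := mem_range.1 (hb' A hA hx)
    rw [mem_range]; omega
  have hbF₀ : ∀ A ∈ F₀, A ⊆ range p := by
    intro A hA x hx
    rw [hF₀, mem_filter] at hA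
    exact hmemrange A hA.1 x hx (fun h => hA.2 (h ▸ hx))
  have hsF₀ : ∀ A ∈ F₀, A.card = a := fun A hA => hs' A (mem_filter.1 hA).1
  have hiF₀ : ∀ A ∈ F₀, ∀ B ∈ F₀, (A ∩ B).Nonempty := fun A hA B hB =>
    hi' A (mem_filter.1 hA).1 B (mem_filter.1 hB).1
  have hTcard : T.card = F₁.card := by
    rw [hT]
    apply Finset.card_image_of_injOn
    intro A hA B hB hAB
    exact erase_injOn' p (by exact (mem_filter.1 hA).2) (by exact (mem_filter.1 hB).2) hAB
  have hbT : ∀ S ∈ T, S ⊆ range p := by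
    intro S hS x hx
    obtain ⟨A, hA, rfl⟩ := mem_image.1 hS
    rw [mem_erase] at hx
    exact hmemrange A (mem_filter.1 hA).1 x hx.2 hx.1
  have hsT : ∀ S ∈ T, S.card = a - 1 := by
    intro S hS
    obtain ⟨A, hA, rfl⟩ := mem_image.1 hS
    rw [card_erase_of_mem (mem_filter.1 hA).2, hs' A (mem_filter.1 hA).1]
  have hiT : ∀ S ∈ T, ∀ S' ∈ T, (S ∩ S').Nonempty := by
    intro S hS S' hS'
    obtain ⟨A, hA, rfl⟩ := mem_image.1 hS
    obtain ⟨B, hB, rfl⟩ := mem_image.1 hS'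
    have hpA : p ∈ A := (mem_filter.1 hA).2
    have hpB : p ∈ B := (mem_filter.1 hB).2
    have hAG : A ∈ G := (mem_filter.1 hA).1
    have hBG : B ∈ G := (mem_filter.1 hB).1
    by_contra hcon
    rw [not_nonempty_iff_eq_empty] at hcon
    have hABsub : A ∩ B ⊆ {p} := by
      intro x hx
      rw [mem_inter] at hx
      rw [mem_singleton]
      by_contra hxp
      have : x ∈ A.erase p ∩ B.erase p :=
        mem_inter.2 ⟨mem_erase.2 ⟨hxp, hx.1⟩, mem_erase.2 ⟨hxp, hx.2⟩⟩
      rw [hcon] at this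
      exact notMem_empty x this
    have hABr : A ∪ B ⊆ range m := union_subset (hb' A hAG) (hb' B hBG)
    have hABcard : (A ∪ B).card ≤ 2 * a - 1 := by
      have h1 := card_union_add_card_inter A B
      have h2 : 1 ≤ (A ∩ B).card := card_pos.2 ⟨p, mem_inter.2 ⟨hpA, hpB⟩⟩
      have h3 := hs' A hAG
      have h4 := hs' B hBG
      omega
    have : ((range m) \ (A ∪ B)).Nonempty := by
      rw [← Finset.card_pos, card_sdiff_of_subset hABr, card_range]
      omega
    obtain ⟨i, hi0⟩ := this
    rw [mem_sdiff, mem_union] at hi0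
    obtain ⟨him, hiAB⟩ := hi0
    push_neg at hiAB
    have hip : i < p := by
      have h1 := mem_range.1 him
      have : i ≠ p := fun h => hiAB.1 (h ▸ hpA)
      omega
    have hA' : insert i (A.erase p) ∈ G := shifted_mem hsh hAG hip hiAB.1 hpA
    obtain ⟨x, hx⟩ := hi' _ hA' B hBG
    rw [mem_inter, mem_insert] at hx
    rcases hx with ⟨rfl | hx1, hx2⟩
    · exact hiAB.2 hx2
    · rw [mem_erase] at hx1
      have : x ∈ A.erase p ∩ B.erase p :=
        mem_inter.2 ⟨mem_erase.2 ⟨hx1.1, hx1.2⟩, mem_erase.2 ⟨hx1.1, hx2⟩⟩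
      rw [hcon] at this
      exact notMem_empty x this
  -- apply induction hypothesis
  have IH₀ : F₀.card ≤ (∂ F₀).card := IHm p hpm a F₀ hbF₀ hsF₀ hiF₀
  have IHT : T.card ≤ (∂ T).card := IHm p hpm (a - 1) T hbT hsT hiT
  -- assemble
  have hX : ∂ F₀ ⊆ (∂ G).filter (fun S => p ∉ S) := by
    intro S hS
    obtain ⟨A, hA, x, hx, rfl⟩ := mem_shadow_iff.1 hS
    have hAG : A ∈ G := (mem_filter.1 hA).1
    have hpA : p ∉ A := (mem_filter.1 hA).2
    exact mem_filter.2 ⟨erase_mem_shadow hAG hx, fun hc => hpA (mem_of_mem_erase hc)⟩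
  have hY : (∂ T).image (insert p) ⊆ (∂ G).filter (fun S => p ∈ S) := by
    intro t ht
    obtain ⟨S, hS, rfl⟩ := mem_image.1 ht
    obtain ⟨S', hS', x, hx, rfl⟩ := mem_shadow_iff.1 hS
    obtain ⟨A, hA, rfl⟩ := mem_image.1 hS'
    have hpA : p ∈ A := (mem_filter.1 hA).2
    have hAG : A ∈ G := (mem_filter.1 hA).1
    have hxp : x ≠ p := (mem_erase.1 hx).1
    have hxA : x ∈ A := (mem_erase.1 hx).2
    have hkey : insert p ((A.erase p).erase x) = A.erase x := by
      rw [erase_right_comm]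
      exact insert_erase (mem_erase.2 ⟨(Ne.symm hxp), hpA⟩)
    rw [hkey]
    exact mem_filter.2 ⟨erase_mem_shadow hAG hxA, mem_erase.2 ⟨Ne.symm hxp, hpA⟩⟩
  have hYcard : ((∂ T).image (insert p)).card = (∂ T).card := by
    apply Finset.card_image_of_injOn
    intro t₁ h₁ t₂ h₂ h12
    have hp₁ : p ∉ t₁ := by
      rw [mem_coe] at h₁
      obtain ⟨S, hS, x, hx, rfl⟩ := mem_shadow_iff.1 h₁
      exact fun hc => absurd (mem_range.1 (hbT S hS (mem_of_mem_erase hc))) (lt_irrefl p)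
    have hp₂ : p ∉ t₂ := by
      rw [mem_coe] at h₂
      obtain ⟨S, hS, x, hx, rfl⟩ := mem_shadow_iff.1 h₂
      exact fun hc => absurd (mem_range.1 (hbT S hS (mem_of_mem_erase hc))) (lt_irrefl p)
    have := congrArg (fun s => Finset.erase s p) h12
    simpa [erase_insert hp₁, erase_insert hp₂] using this
  have hGsplit : F₁.card + F₀.card = G.card := by
    rw [hF₀, hF₁]
    exact card_filter_add_card_filter_not (fun A => p ∈ A)
  have hDsplit : ((∂ G).filter (fun S => p ∈ S)).card
      + ((∂ G).filter (fun S => ¬ p ∈ S)).card = (∂ G).card :=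
    card_filter_add_card_filter_not (fun S => p ∈ S)
  calc G.card = F₁.card + F₀.card := hGsplit.symm
    _ ≤ (∂ T).card + (∂ F₀).card := by
        have := hTcard ▸ IHT
        omega
    _ ≤ ((∂ G).filter (fun S => p ∈ S)).card + ((∂ G).filter (fun S => ¬ p ∈ S)).card := by
        have h1 : (∂ T).card ≤ ((∂ G).filter (fun S => p ∈ S)).card := by
          rw [← hYcard]
          exact card_le_card hY
        have h2 : (∂ F₀).card ≤ ((∂ G).filter (fun S => ¬ p ∈ S)).card := by
          refine card_le_card (hX.trans ?_)
          intro x hx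
          simpa using hx
        omega
    _ = (∂ G).card := hDsplit


/-- Katona-type bound for the upper shadow: a `k`-intersecting family of `s`-sets in `Fin n`
with `2s + 1 ≤ n + k` has an upper shadow at least as large. -/
lemma card_le_card_upShadow (n k s : ℕ) (F : Finset (Finset (Fin n)))
    (hs : ∀ A ∈ F, A.card = s) (hint : ∀ A ∈ F, ∀ B ∈ F, k ≤ (A ∩ B).card)
    (hn : 2 * s + 1 ≤ n + k) : F.card ≤ (∂⁺ F).card := by
  classical
  set G : Finset (Finset (Fin n)) := Fᶜˢ with hG
  have hGcard : G.card = F.card := card_compls F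
  have hcardfin : Fintype.card (Fin n) = n := Fintype.card_fin n
  have hGs : ∀ A ∈ G, A.card = n - s := by
    rw [hG]
    rw [Finset.forall_mem_compls]
    intro A hA
    rw [Finset.card_compl, hcardfin, hs A hA]
  have hGi : ∀ A ∈ G, ∀ B ∈ G, (A ∩ B).Nonempty := by
    rw [hG]
    rw [Finset.forall_mem_compls]
    intro A hA
    rw [Finset.forall_mem_compls]
    intro B hB
    rw [← Finset.compl_union, ← Finset.card_pos, Finset.card_compl, hcardfin]
    have h1 := Finset.card_union_add_card_inter A B
    have h2 := hint A hA B hB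
    have h3 := hs A hA
    have h4 := hs B hB
    have h5 : (A ∪ B).card ≤ Fintype.card (Fin n) := Finset.card_le_univ _
    omega
  set e : Fin n ↪ ℕ := Fin.valEmbedding with he
  set H : Finset (Finset ℕ) := G.image (fun A => A.map e) with hH
  have hHcard : H.card = G.card :=
    Finset.card_image_of_injective _ (Finset.map_injective e)
  have hHb : ∀ A ∈ H, A ⊆ range n := by
    intro A hA x hx
    obtain ⟨B, _, rfl⟩ := mem_image.1 hA
    obtain ⟨y, _, rfl⟩ := Finset.mem_map.1 hx
    exact mem_range.2 y.isLt
  have hHs : ∀ A ∈ H, A.card = n - s := by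
    intro A hA
    obtain ⟨B, hB, rfl⟩ := mem_image.1 hA
    rw [Finset.card_map]
    exact hGs B hB
  have hHi : ∀ A ∈ H, ∀ B ∈ H, (A ∩ B).Nonempty := by
    intro A hA B hB
    obtain ⟨A', hA', rfl⟩ := mem_image.1 hA
    obtain ⟨B', hB', rfl⟩ := mem_image.1 hB
    rw [← Finset.map_inter]
    rw [Finset.map_nonempty]
    exact hGi A' hA' B' hB'
  have hmain := katonaN n (n - s) H hHb hHs hHi
  rw [hH, shadow_map] at hmain
  rw [Finset.card_image_of_injective _ (Finset.map_injective e)] at hmain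
  rw [Finset.card_image_of_injective _ (Finset.map_injective e)] at hmain
  rw [hG, shadow_compls] at hmain
  have hfin : ((∂⁺ F)ᶜˢ).card = (∂⁺ F).card := card_compls _
  have hF : (Fᶜˢ).card = F.card := card_compls _
  omega

/-- Binomial coefficients decrease above the middle. -/
lemma choose_anti (n t : ℕ) (hnt : n ≤ 2 * t) : ∀ r, t ≤ r → n.choose r ≤ n.choose t := by
  intro r
  induction r with
  | zero =>
    intro h
    simp_all
  | succ r IHr =>
    intro h
    rcases Nat.lt_or_ge t (r + 1) with h' | h'
    · have htr : t ≤ r := by omega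
      refine le_trans ?_ (IHr htr)
      have hkey := Nat.choose_succ_right_eq n r
      have h2 : n - r ≤ r + 1 := by omega
      have := Nat.mul_le_mul_left (n.choose r) h2
      have h3 : n.choose (r + 1) * (r + 1) ≤ n.choose r * (r + 1) := by
        rw [hkey]
        exact Nat.mul_le_mul_left _ h2
      exact Nat.le_of_mul_le_mul_right h3 (by omega)
    · have : t = r + 1 := by omega
      subst this
      exact le_rfl

/-- LYM-type final step: an antichain all of whose sets have at least `t` elements,
where `t` is at least half of `n`, has size at most `n.choose t`. -/
lemma antichain_large_sets_bound (n t : ℕ) (hnt : n ≤ 2 * t) (F : Finset (Finset (Fin n)))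
    (hanti : IsAntichain (· ⊆ ·) (F : Set (Finset (Fin n))))
    (hcard : ∀ A ∈ F, t ≤ A.card) : F.card ≤ n.choose t := by
  classical
  rcases F.eq_empty_or_nonempty with rfl | ⟨A₀, hA₀⟩
  · simp
  have htn : t ≤ n := by
    refine le_trans (hcard A₀ hA₀) ?_
    have := Finset.card_le_univ A₀
    rwa [Fintype.card_fin] at this
  have hchooset : 0 < n.choose t := Nat.choose_pos htn
  have hLYM := Finset.sum_card_slice_div_choose_le_one (𝕜 := ℚ) hanti
  rw [Fintype.card_fin] at hLYM
  have hkey : ∀ r ∈ range (n + 1), ((F # r).card : ℚ) / (n.choose t)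
      ≤ ((F # r).card : ℚ) / (n.choose r) := by
    intro r hr
    rcases (F # r).eq_empty_or_nonempty with he | ⟨B, hB⟩
    · rw [he]
      simp
    · have hBmem := Finset.mem_slice.1 hB
      have htr : t ≤ r := hBmem.2 ▸ hcard B hBmem.1
      have hrn : r ≤ n := by rw [mem_range] at hr; omega
      apply div_le_div_of_nonneg_left
      · positivity
      · exact_mod_cast Nat.choose_pos hrn
      · exact_mod_cast choose_anti n t hnt r htr
  have hsum : ∑ r ∈ range (n + 1), ((F # r).card : ℚ) / (n.choose t) ≤ 1 :=
    le_trans (Finset.sum_le_sum hkey) hLYM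
  have hslice : ∑ r ∈ range (n + 1), (F # r).card = F.card := by
    have := Finset.sum_card_slice (𝒜 := F)
    rw [Fintype.card_fin] at this
    rw [← this]
    congr 1
    ext x
    simp [Nat.lt_succ_iff]
  rw [← Finset.sum_div] at hsum
  rw [div_le_one (by exact_mod_cast hchooset)] at hsum
  have : (F.card : ℚ) ≤ (n.choose t : ℚ) := by
    rw [← hslice]
    exact_mod_cast hsum
  exact_mod_cast this


/-- One push-up step: replace the minimal layer with (part of) its upper shadow. -/
lemma push_step (n k t : ℕ) (F : Finset (Finset (Fin n)))
    (hanti : IsAntichain (· ⊆ ·) (F : Set (Finset (Fin n))))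
    (hint : ∀ A ∈ F, ∀ B ∈ F, k ≤ (A ∩ B).card)
    (hex : ∃ A ∈ F, A.card < t) (h2 : 2 * t ≤ n + k + 1) :
    ∃ F' : Finset (Finset (Fin n)), IsAntichain (· ⊆ ·) (F' : Set (Finset (Fin n))) ∧
      (∀ A ∈ F', ∀ B ∈ F', k ≤ (A ∩ B).card) ∧ F'.card = F.card ∧
      (∑ A ∈ F', (t - A.card)) < ∑ A ∈ F, (t - A.card) := by
  classical
  obtain ⟨A₁, hA₁, hA₁t⟩ := hex
  have hFne : F.Nonempty := ⟨A₁, hA₁⟩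
  set s := ((F.image Finset.card).min' (hFne.image _)) with hs
  have hsmin : ∀ C ∈ F, s ≤ C.card := fun C hC =>
    Finset.min'_le _ _ (mem_image_of_mem _ hC)
  have hst : s < t := lt_of_le_of_lt (hsmin A₁ hA₁) hA₁t
  obtain ⟨AS, hASF, hAScard⟩ : ∃ A ∈ F, A.card = s := by
    have h := (F.image Finset.card).min'_mem (hFne.image _)
    rw [mem_image] at h
    obtain ⟨A, hA, hAc⟩ := h
    exact ⟨A, hA, hAc⟩
  set Fs := F.filter (fun A => A.card = s) with hFs
  have hFsne : Fs.Nonempty := ⟨AS, mem_filter.2 ⟨hASF, hAScard⟩⟩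
  have hFssub : Fs ⊆ F := filter_subset _ _
  have hFs_sized : ∀ A ∈ Fs, A.card = s := fun A hA => (mem_filter.1 hA).2
  have hup : Fs.card ≤ (∂⁺ Fs).card := by
    refine card_le_card_upShadow n k s Fs hFs_sized
      (fun A hA B hB => hint A (hFssub hA) B (hFssub hB)) (by omega)
  obtain ⟨S, hSsub, hScard⟩ := Finset.exists_subset_card_eq hup
  have hSfacts : ∀ B ∈ S, B.card = s + 1 ∧ ∃ A ∈ Fs, A ⊆ B := by
    intro B hB
    have hB' := hSsub hB
    refine ⟨?_, exists_subset_of_mem_upShadow hB'⟩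
    exact Set.Sized.upShadow (fun A hA => hFs_sized A hA) hB'
  have hSnotF : ∀ B ∈ S, B ∉ F := by
    intro B hB hBF
    obtain ⟨hBcard, A, hA, hAB⟩ := hSfacts B hB
    have hAF : A ∈ F := hFssub hA
    have hAcard : A.card = s := hFs_sized A hA
    have hne : A ≠ B := fun h => by rw [h, hBcard] at hAcard; omega
    exact hanti (Finset.mem_coe.2 hAF) (Finset.mem_coe.2 hBF) hne hAB
  have hdisj : Disjoint (F \ Fs) S := by
    rw [disjoint_left]
    intro X hX hXS
    exact hSnotF X hXS (mem_sdiff.1 hX).1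
  set F' := (F \ Fs) ∪ S with hF'
  -- facts about member shapes
  have hmem1 : ∀ X ∈ F \ Fs, X ∈ F ∧ s + 1 ≤ X.card := by
    intro X hX
    rw [mem_sdiff] at hX
    obtain ⟨hXF, hXns⟩ := hX
    have h1 := hsmin X hXF
    have h2 : X.card ≠ s := fun h => hXns (mem_filter.2 ⟨hXF, h⟩)
    exact ⟨hXF, by omega⟩
  have hmem2 : ∀ X ∈ S, X.card = s + 1 ∧ ∃ A ∈ F, A.card = s ∧ A ⊆ X := by
    intro X hX
    obtain ⟨h1, A, hA, hAX⟩ := hSfacts X hX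
    exact ⟨h1, A, hFssub hA, hFs_sized A hA, hAX⟩
  refine ⟨F', ?_, ?_, ?_, ?_⟩
  · -- antichain
    intro X hX Y hY hne hsub
    rw [Finset.mem_coe, hF', mem_union] at hX hY
    rcases hX with hX | hX <;> rcases hY with hY | hY
    · exact hanti (Finset.mem_coe.2 (mem_sdiff.1 hX).1) (Finset.mem_coe.2 (mem_sdiff.1 hY).1)
        hne hsub
    · obtain ⟨hXF, hXcard⟩ := hmem1 X hX
      obtain ⟨hYcard, -⟩ := hmem2 Y hY
      exact hne (Finset.eq_of_subset_of_card_le hsub (by omega))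
    · obtain ⟨hXcard, A, hAF, hAcard, hAX⟩ := hmem2 X hX
      obtain ⟨hYF, hYcard⟩ := hmem1 Y hY
      have hAY : A ≠ Y := fun h => by rw [h] at hAcard; omega
      exact hanti (Finset.mem_coe.2 hAF) (Finset.mem_coe.2 hYF) hAY (hAX.trans hsub)
    · obtain ⟨hXcard, -⟩ := hmem2 X hX
      obtain ⟨hYcard, -⟩ := hmem2 Y hY
      exact hne (Finset.eq_of_subset_of_card_le hsub (by omega))
  · -- k-intersecting
    have key : ∀ X ∈ F', ∃ X₀ ∈ F, X₀ ⊆ X := by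
      intro X hX
      rw [hF', mem_union] at hX
      rcases hX with hX | hX
      · exact ⟨X, (mem_sdiff.1 hX).1, Finset.Subset.refl X⟩
      · obtain ⟨-, A, hAF, -, hAX⟩ := hmem2 X hX
        exact ⟨A, hAF, hAX⟩
    intro X hX Y hY
    obtain ⟨X₀, hX₀, hX₀X⟩ := key X hX
    obtain ⟨Y₀, hY₀, hY₀Y⟩ := key Y hY
    exact le_trans (hint X₀ hX₀ Y₀ hY₀)
      (card_le_card (inter_subset_inter hX₀X hY₀Y))
  · -- cardinality
    rw [hF', card_union_of_disjoint hdisj, card_sdiff_of_subset hFssub, hScard]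
    have := card_le_card hFssub
    omega
  · -- measure decreases
    rw [hF', Finset.sum_union hdisj]
    have hsum1 : ∑ A ∈ S, (t - A.card) = S.card * (t - (s + 1)) := by
      rw [Finset.sum_congr rfl fun A hA => by rw [(hSfacts A hA).1]]
      rw [Finset.sum_const, smul_eq_mul]
    have hsum2 : ∑ A ∈ Fs, (t - A.card) = Fs.card * (t - s) := by
      rw [Finset.sum_congr rfl fun A hA => by rw [hFs_sized A hA]]
      rw [Finset.sum_const, smul_eq_mul]
    have hsplit : ∑ A ∈ F \ Fs, (t - A.card) + ∑ A ∈ Fs, (t - A.card)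
        = ∑ A ∈ F, (t - A.card) := Finset.sum_sdiff hFssub
    have hmul : S.card * (t - (s + 1)) < Fs.card * (t - s) := by
      rw [hScard]
      exact mul_lt_mul_of_pos_left (by omega) (Finset.card_pos.2 hFsne)
    omega

/-- Push-up induction. -/
lemma pushup (n k t : ℕ) (hkt : n + k ≤ 2 * t) (h2 : 2 * t ≤ n + k + 1) :
    ∀ (N : ℕ) (F : Finset (Finset (Fin n))), (∑ A ∈ F, (t - A.card)) ≤ N →
    IsAntichain (· ⊆ ·) (F : Set (Finset (Fin n))) →
    (∀ A ∈ F, ∀ B ∈ F, k ≤ (A ∩ B).card) → F.card ≤ n.choose t := by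
  intro N
  induction N with
  | zero =>
    intro F hm hanti hint
    by_cases hall : ∀ A ∈ F, t ≤ A.card
    · exact antichain_large_sets_bound n t (by omega) F hanti hall
    · exfalso
      push_neg at hall
      obtain ⟨F', -, -, -, hlt⟩ := push_step n k t F hanti hint
        (by obtain ⟨A, hA, h⟩ := hall; exact ⟨A, hA, h⟩) h2
      omega
  | succ N IH =>
    intro F hm hanti hint
    by_cases hall : ∀ A ∈ F, t ≤ A.card
    · exact antichain_large_sets_bound n t (by omega) F hanti hall
    · push_neg at hall
      obtain ⟨F', h1, h2', h3, hlt⟩ := push_step n k t F hanti hint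
        (by obtain ⟨A, hA, h⟩ := hall; exact ⟨A, hA, h⟩) h2
      rw [← h3]
      exact IH F' (by omega) h1 h2'

end MilnerAux

theorem milner_intersecting_antichain (n k : ℕ) (F : Finset (Finset (Fin n)))
    (hanti : IsAntichain (· ⊆ ·) (F : Set (Finset (Fin n))))
    (hint : ∀ A ∈ F, ∀ B ∈ F, k ≤ (A ∩ B).card) :
    F.card ≤ n.choose ⌈((n : ℚ) + k) / 2⌉₊ := by
  classical
  set t := ⌈((n : ℚ) + k) / 2⌉₊ with ht
  have f1 : n + k ≤ 2 * t := by
    have h := Nat.le_ceil (((n : ℚ) + k) / 2)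
    rw [← ht] at h
    have h' : ((n + k : ℕ) : ℚ) ≤ 2 * t := by
      push_cast
      linarith
    exact_mod_cast h'
  have f2 : 2 * t ≤ n + k + 1 := by
    have h := Nat.ceil_lt_add_one (show (0 : ℚ) ≤ ((n : ℚ) + k) / 2 by positivity)
    rw [← ht] at h
    have h' : ((2 * t : ℕ) : ℚ) < ((n + k + 2 : ℕ) : ℚ) := by
      push_cast
      linarith
    have := (by exact_mod_cast h' : 2 * t < n + k + 2)
    omega
  exact MilnerAux.pushup n k t f1 f2 (∑ A ∈ F, (t - A.card)) F le_rfl hanti hint
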